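/- Let x_1, …, x_N be points in ℝ^n. The infimum, over all injective codings c : {1, …, N} → ℝ and all continuous decoding functions f : ℝ → ℝ^n satisfying f(c(i)) = x_i for every i, of the total variation (arc length) of f over the interval [min_i c(i), max_i c(i)], equals the minimum over all permutations σ of {1, …, N} of ∑_{i=2}^{N} dist(x_{σ(i−1)}, x_{σ(i)}), i.e., the length of the shortest Hamiltonian path through x_1, …, x_N. -/

import Mathlib

open Set Finset Fin.NatCast

lemma seg_var_le {E : Type*} [NormedAddCommGroup E] [NormedSpace ℝ E]
    (f : ℝ → E) (a b : ℝ) (hab : a ≤ b) (v : E)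
    (h : ∀ s ∈ Set.Icc a b, ∀ t ∈ Set.Icc a b, f s - f t = (s - t) • v) :
    eVariationOn f (Set.Icc a b) ≤ ENNReal.ofReal ((b - a) * ‖v‖) := by
  set L : ℝ → E := fun r => f a + (r - a) • v with hL
  have hfL : Set.EqOn f L (Set.Icc a b) := by
    intro t ht
    have := h t ht a ⟨le_rfl, hab⟩
    simp only [hL]
    rw [← this]
    abel
  have hLip : LipschitzWith ‖v‖₊ L := by
    apply LipschitzWith.of_dist_le_mul
    intro s t
    have : L s - L t = (s - t) • v := by
      simp only [hL]
      rw [add_sub_add_left_eq_sub, ← sub_smul]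
      ring_nf
    rw [dist_eq_norm, this, norm_smul, Real.dist_eq, Real.norm_eq_abs, mul_comm, coe_nnnorm]
  calc eVariationOn f (Set.Icc a b) = eVariationOn L (Set.Icc a b) :=
        eVariationOn.eq_of_eqOn hfL
    _ = eVariationOn (L ∘ id) (Set.Icc a b) := rfl
    _ ≤ ‖v‖₊ * eVariationOn id (Set.Icc a b) :=
        hLip.lipschitzOnWith.comp_eVariationOn_le (Set.mapsTo_univ _ _)
    _ ≤ ‖v‖₊ * ENNReal.ofReal (b - a) := by
        apply mul_le_mul_right
        have := (monotoneOn_id (s := Set.Icc a b)).eVariationOn_le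
          (Set.left_mem_Icc.2 hab) (Set.right_mem_Icc.2 hab)
        simpa using this
    _ = ENNReal.ofReal ((b - a) * ‖v‖) := by
        rw [← enorm_eq_nnnorm, ← ofReal_norm, ← ENNReal.ofReal_mul (norm_nonneg v), mul_comm]

/-- The infimum, over all injective one-dimensional codings `c` of the points
`x 0, …, x N` and all continuous decoding functions `f : ℝ → ℝ^n` with `f (c i) = x i`,
of the total variation (arc length) of `f` over `[min_i c i, max_i c i]`, equals the
length of the shortest Hamiltonian path through `x 0, …, x N`, i.e. the minimum over
permutations `σ` of `∑_{i=1}^{N} dist (x (σ (i-1))) (x (σ i))`. -/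
theorem mmc_one_dim_eq_shortest_hamiltonian_path {n N : ℕ}
    (x : Fin (N + 1) → EuclideanSpace ℝ (Fin n)) :
    (⨅ (c : Fin (N + 1) → ℝ) (_ : Function.Injective c)
        (f : ℝ → EuclideanSpace ℝ (Fin n)) (_ : Continuous f) (_ : ∀ i, f (c i) = x i),
        eVariationOn f (Set.Icc (⨅ i, c i) (⨆ i, c i)))
      = ⨅ σ : Equiv.Perm (Fin (N + 1)),
          ENNReal.ofReal (∑ i : Fin N, dist (x (σ i.castSucc)) (x (σ i.succ))) := by
  apply le_antisymm
  · -- LHS ≤ RHS : for each permutation build a piecewise linear path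
    apply le_iInf; intro σ
    set w : ℕ → EuclideanSpace ℝ (Fin n) := fun k => x (σ (k : Fin (N+1))) with hw
    set c : Fin (N+1) → ℝ := fun i => ((σ.symm i : ℕ) : ℝ) with hc
    set φ : ℕ → ℝ → ℝ := fun k t => min (max (t - k) 0) 1 with hφ
    set f : ℝ → EuclideanSpace ℝ (Fin n) :=
      fun t => w 0 + ∑ k ∈ Finset.range N, φ k t • (w (k+1) - w k) with hf
    have hcinj : Function.Injective c := by
      intro i j hij
      have h0 : ((σ.symm i : ℕ) : ℝ) = ((σ.symm j : ℕ) : ℝ) := hij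
      have h1 : σ.symm i = σ.symm j := Fin.ext (Nat.cast_injective h0)
      simpa using congrArg σ h1
    have hfcont : Continuous f := by
      apply Continuous.add continuous_const
      apply continuous_finset_sum
      intro k _
      exact (((continuous_id.sub continuous_const).max continuous_const).min
        continuous_const).smul continuous_const
    have hφval : ∀ (k j : ℕ), φ k (j : ℝ) = if k < j then 1 else 0 := by
      intro k j
      simp only [hφ]
      split_ifs with hkj
      · have h1 : (k:ℝ) + 1 ≤ j := by exact_mod_cast hkj
        rw [max_eq_left (by linarith), min_eq_right (by linarith)]
      · have h1 : (j:ℝ) ≤ k := by exact_mod_cast Nat.le_of_not_lt hkj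
        rw [max_eq_right (by linarith), min_eq_left (by norm_num)]
    have hfeval : ∀ j : Fin (N+1), f ((j : ℕ) : ℝ) = x (σ j) := by
      intro j
      simp only [hf]
      have h0 : ∀ k ∈ Finset.range N, φ k ((j:ℕ):ℝ) • (w (k+1) - w k)
          = if k < (j:ℕ) then (w (k+1) - w k) else 0 := by
        intro k _
        rw [hφval]
        split_ifs <;> simp
      rw [Finset.sum_congr rfl h0]
      have h1 : ∑ k ∈ Finset.range N, (if k < (j:ℕ) then (w (k+1) - w k) else 0)
          = ∑ k ∈ Finset.range (j:ℕ), (w (k+1) - w k) := by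
        rw [← Finset.sum_subset (Finset.range_subset_range.2 j.is_le)]
        · exact Finset.sum_congr rfl fun k hk => if_pos (Finset.mem_range.1 hk)
        · intro k _ hk
          exact if_neg fun h => hk (Finset.mem_range.2 h)
      have h2 : w (j:ℕ) = x (σ j) := by
        simp only [hw, Fin.cast_val_eq_self]
      rw [h1, Finset.sum_range_sub, h2]
      abel
    have hfx : ∀ i, f (c i) = x i := by
      intro i
      have := hfeval (σ.symm i)
      simpa using this
    have hinf : (⨅ i, c i) = 0 := by
      apply le_antisymm
      · have := ciInf_le (Set.Finite.bddBelow (Set.finite_range c)) (σ 0)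
        simpa [hc] using this
      · exact le_ciInf fun i => by positivity
    have hsup : (⨆ i, c i) = (N : ℝ) := by
      apply le_antisymm
      · exact ciSup_le fun i => by exact_mod_cast Nat.cast_le.2 (Fin.is_le _)
      · have := le_ciSup (Set.Finite.bddAbove (Set.finite_range c)) (σ (Fin.last N))
        simpa [hc] using this
    -- segment bound
    have hseg : ∀ m : ℕ, m < N →
        eVariationOn f (Set.Icc (m:ℝ) ((m+1:ℕ):ℝ))
          ≤ ENNReal.ofReal (dist (w m) (w (m+1))) := by
      intro m hm
      have hmle : (m:ℝ) ≤ ((m+1:ℕ):ℝ) := by push_cast; linarith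
      have haff : ∀ s ∈ Set.Icc (m:ℝ) ((m+1:ℕ):ℝ), ∀ t ∈ Set.Icc (m:ℝ) ((m+1:ℕ):ℝ),
          f s - f t = (s - t) • (w (m+1) - w m) := by
        intro s hs t ht
        have hφs : ∀ r ∈ Set.Icc (m:ℝ) ((m+1:ℕ):ℝ), ∀ k, k ≠ m →
            φ k r = if k < m then 1 else 0 := by
          intro r hr k hk
          obtain ⟨hr1, hr2⟩ := hr
          push_cast at hr2
          simp only [hφ]
          split_ifs with hkm
          · have h1 : (k:ℝ) + 1 ≤ m := by exact_mod_cast hkm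
            rw [max_eq_left (by linarith), min_eq_right (by linarith)]
          · have h2 : (m:ℝ) + 1 ≤ k := by
              have : m + 1 ≤ k := Nat.succ_le_of_lt (lt_of_le_of_ne (Nat.le_of_not_lt hkm) (Ne.symm hk))
              exact_mod_cast this
            rw [max_eq_right (by linarith), min_eq_left (by norm_num)]
        have hφm : ∀ r ∈ Set.Icc (m:ℝ) ((m+1:ℕ):ℝ), φ m r = r - m := by
          intro r hr
          obtain ⟨hr1, hr2⟩ := hr
          push_cast at hr2
          simp only [hφ]
          rw [max_eq_left (by linarith), min_eq_left (by linarith)]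
        simp only [hf]
        rw [add_sub_add_left_eq_sub, ← Finset.sum_sub_distrib]
        have h3 : ∀ k ∈ Finset.range N, φ k s • (w (k+1) - w k) - φ k t • (w (k+1) - w k)
            = if k = m then (s - t) • (w (m+1) - w m) else 0 := by
          intro k _
          split_ifs with hkm
          · subst hkm
            rw [hφm s hs, hφm t ht, ← sub_smul]
            ring_nf
          · rw [hφs s hs k hkm, hφs t ht k hkm, sub_self]
        rw [Finset.sum_congr rfl h3, Finset.sum_ite_eq' (Finset.range N) m,
          if_pos (Finset.mem_range.2 hm)]
      refine le_trans (seg_var_le f _ _ hmle _ haff) (le_of_eq ?_)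
      congr 1
      rw [dist_eq_norm']
      push_cast
      ring_nf
    -- inductive bound over [0, m]
    have key : ∀ m, m ≤ N → eVariationOn f (Set.Icc (0:ℝ) (m:ℕ))
        ≤ ∑ k ∈ Finset.range m, ENNReal.ofReal (dist (w k) (w (k+1))) := by
      intro m
      induction m with
      | zero =>
        intro _
        simp only [Nat.cast_zero, Finset.range_zero, Finset.sum_empty]
        rw [Set.Icc_self]
        exact le_of_eq (eVariationOn.subsingleton f Set.subsingleton_singleton)
      | succ m ih =>
        intro hm
        have h1 : (0:ℝ) ≤ (m:ℕ) := Nat.cast_nonneg m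
        have h2 : ((m:ℕ):ℝ) ≤ ((m+1:ℕ):ℝ) := by push_cast; linarith
        have hadd := eVariationOn.Icc_add_Icc f (s := Set.univ) h1 h2 (Set.mem_univ _)
        simp only [Set.univ_inter] at hadd
        rw [← hadd, Finset.sum_range_succ]
        exact add_le_add (ih (Nat.le_of_succ_le hm)) (hseg m hm)
    refine iInf_le_of_le c (iInf_le_of_le hcinj (iInf_le_of_le f (iInf_le_of_le hfcont
      (iInf_le_of_le hfx ?_))))
    rw [hinf, hsup]
    have hsum : (∑ i : Fin N, dist (x (σ i.castSucc)) (x (σ i.succ)))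
        = ∑ k ∈ Finset.range N, dist (w k) (w (k+1)) := by
      rw [← Fin.sum_univ_eq_sum_range (fun k => dist (w k) (w (k+1)))]
      apply Finset.sum_congr rfl
      intro i _
      have e1 : w (i:ℕ) = x (σ i.castSucc) := by
        have h : (((i:ℕ) : ℕ) : Fin (N+1)) = i.castSucc :=
          Fin.ext (by simp [Fin.val_cast_of_lt (Nat.lt_succ_of_lt i.isLt)])
        simp only [hw, h]
      have e2 : w ((i:ℕ)+1) = x (σ i.succ) := by
        have h : (((i:ℕ)+1 : ℕ) : Fin (N+1)) = i.succ :=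
          Fin.ext (by simp [Fin.val_cast_of_lt (Nat.succ_lt_succ i.isLt)])
        simp only [hw, h]
      rw [e1, e2]
    rw [hsum, ENNReal.ofReal_sum_of_nonneg (fun i _ => dist_nonneg)]
    exact key N le_rfl
  · -- RHS ≤ LHS : sort the coding values
    apply le_iInf; intro c; apply le_iInf; intro hcinj
    apply le_iInf; intro f; apply le_iInf; intro _; apply le_iInf; intro hfx
    set σ := Tuple.sort c with hσ
    refine le_trans (iInf_le _ σ) ?_
    set u : ℕ → ℝ := fun j => c (σ ⟨min j N, Nat.lt_succ_of_le (min_le_right _ _)⟩) with hu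
    have hmono : Monotone u := by
      intro a b hab
      exact Tuple.monotone_sort c (Fin.mk_le_mk.2 (min_le_min hab le_rfl))
    have hus : ∀ j, u j ∈ Set.Icc (⨅ i, c i) (⨆ i, c i) := fun j =>
      ⟨ciInf_le (Set.Finite.bddBelow (Set.finite_range c)) _,
       le_ciSup (Set.Finite.bddAbove (Set.finite_range c)) _⟩
    have hle := eVariationOn.sum_le (f := f) (n := N) hmono hus
    refine le_trans (le_of_eq ?_) hle
    rw [ENNReal.ofReal_sum_of_nonneg (fun i _ => dist_nonneg),
      ← Fin.sum_univ_eq_sum_range (fun k => edist (f (u (k+1))) (f (u k)))]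
    apply Finset.sum_congr rfl
    intro i _
    have e1 : u (i:ℕ) = c (σ i.castSucc) := by
      have h : (⟨min (i:ℕ) N, Nat.lt_succ_of_le (min_le_right _ _)⟩ : Fin (N+1))
          = i.castSucc := Fin.ext (by simp [min_eq_left (le_of_lt i.isLt)])
      simp only [hu, h]
    have e2 : u ((i:ℕ)+1) = c (σ i.succ) := by
      have h : (⟨min ((i:ℕ)+1) N, Nat.lt_succ_of_le (min_le_right _ _)⟩ : Fin (N+1))
          = i.succ := Fin.ext (by simp [min_eq_left (Nat.succ_le_of_lt i.isLt)])
      simp only [hu, h]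
    rw [e1, e2, hfx, hfx, edist_dist, dist_comm]
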